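/- arXiv:1609.07301 — 2 statements merged into one kernel-verified Lean document; each statement's English description precedes it below -/
import Mathlib

section
/- For all natural numbers k, p and every real z with |z| < 1, ∑_{n=0}^∞ n^k · c(n,p) · z^n/n! = ∑_{j=0}^{k} S(k,j) · z^j · D^{(j)}[ x ↦ (-1)^p (log(1-x))^p / p! ](z), where D^{(j)} denotes the j-th derivative with respect to the variable, evaluated at z. -/
/-- Unsigned Stirling numbers of the first kind. -/
def stirling1 : ℕ → ℕ → ℕ
  | 0, 0 => 1
  | 0, _ + 1 => 0
  | _ + 1, 0 => 0
  | n + 1, k + 1 => n * stirling1 n (k + 1) + stirling1 n k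

/-- Stirling numbers of the second kind. -/
def stirling2 : ℕ → ℕ → ℕ
  | 0, 0 => 1
  | 0, _ + 1 => 0
  | _ + 1, 0 => 0
  | n + 1, k + 1 => (k + 1) * stirling2 n (k + 1) + stirling2 n k

/-- First-order Eulerian numbers. -/
def eulerian : ℕ → ℕ → ℕ
  | 0, 0 => 1
  | 0, _ + 1 => 0
  | n + 1, 0 => eulerian n 0
  | n + 1, m + 1 => (m + 2) * eulerian n (m + 1) + (n - m) * eulerian n m

/-- Second-order Eulerian numbers. -/
def eulerian2 : ℕ → ℕ → ℕ
  | 0, 0 => 1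
  | 0, _ + 1 => 0
  | n + 1, 0 => eulerian2 n 0
  | n + 1, m + 1 => (m + 2) * eulerian2 n (m + 1) + (2 * n - m) * eulerian2 n m

open Finset Metric

section Aux

lemma stirling1_le (n : ℕ) : ∀ p, stirling1 n p ≤ n.factorial := by
  induction n with
  | zero => intro p; cases p with
    | zero => simp [stirling1]
    | succ p => simp [stirling1]
  | succ n ih =>
    intro p
    cases p with
    | zero => simp [stirling1]
    | succ p =>
      calc stirling1 (n+1) (p+1) = n * stirling1 n (p+1) + stirling1 n p := rfl
        _ ≤ n * n.factorial + n.factorial :=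
          Nat.add_le_add (Nat.mul_le_mul_left n (ih _)) (ih _)
        _ = (n+1).factorial := by rw [Nat.factorial_succ]; ring

lemma fact_add_le (j n : ℕ) : (n + j).factorial ≤ ((n+1)*(j+1))^j * n.factorial := by
  induction j with
  | zero => simp
  | succ j ih =>
    have h1 : (n + (j+1)).factorial = (n + j + 1) * (n + j).factorial := by
      rw [show n + (j+1) = (n+j) + 1 by ring, Nat.factorial_succ]
    rw [h1]
    calc (n + j + 1) * (n + j).factorial ≤ ((n+1)*(j+2)) * (((n+1)*(j+1))^j * n.factorial) := by
          apply Nat.mul_le_mul _ ih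
          nlinarith
      _ ≤ ((n+1)*(j+2))^(j+1) * n.factorial := by
          rw [pow_succ]
          have : ((n+1)*(j+1))^j ≤ ((n+1)*(j+2))^j := by
            apply Nat.pow_le_pow_left; nlinarith
          calc ((n+1)*(j+2)) * (((n+1)*(j+1))^j * n.factorial)
              = ((n+1)*(j+1))^j * ((n+1)*(j+2)) * n.factorial := by ring
            _ ≤ ((n+1)*(j+2))^j * ((n+1)*(j+2)) * n.factorial := by
                apply Nat.mul_le_mul_right
                apply Nat.mul_le_mul_right
                exact this

lemma aux_summable_pow (j : ℕ) {s : ℝ} (h1 : |s| < 1) :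
    Summable fun n : ℕ => ((n : ℝ) + 1) ^ j * s ^ n := by
  have key : ∀ n : ℕ, ((n : ℝ) + 1) ^ j * s ^ n
      = ∑ i ∈ range (j+1), (j.choose i : ℝ) * ((n : ℝ) ^ i * s ^ n) := by
    intro n
    rw [add_pow]
    rw [Finset.sum_mul]
    apply Finset.sum_congr rfl
    intro i _
    ring
  rw [funext key]
  apply summable_sum
  intro i _
  exact (summable_pow_mul_geometric_of_norm_lt_one (R := ℝ) i (by rwa [Real.norm_eq_abs])).mul_left (j.choose i : ℝ)

lemma summable_coeff (p j : ℕ) {r : ℝ} (hr : |r| < 1) :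
    Summable (fun n : ℕ => (stirling1 (n+j) p : ℝ) / n.factorial * r ^ n) := by
  apply Summable.of_norm
  have hb : ∀ n : ℕ, ‖(stirling1 (n+j) p : ℝ) / n.factorial * r ^ n‖
      ≤ ((j:ℝ)+1)^j * (((n:ℝ)+1)^j * |r| ^ n) := by
    intro n
    rw [norm_mul, norm_div, norm_pow, Real.norm_eq_abs, Real.norm_eq_abs, Real.norm_eq_abs]
    rw [abs_of_nonneg (by positivity : (0:ℝ) ≤ (stirling1 (n+j) p : ℝ)),
      abs_of_nonneg (by positivity : (0:ℝ) ≤ (n.factorial : ℝ))]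
    have h1 : (stirling1 (n+j) p : ℝ) ≤ ((n+j).factorial : ℝ) := by
      exact_mod_cast stirling1_le _ _
    have h2 : ((n+j).factorial : ℝ) ≤ (((n:ℝ)+1)*((j:ℝ)+1))^j * n.factorial := by
      have h : (((n + j).factorial : ℕ) : ℝ) ≤ ((((n+1)*(j+1))^j * n.factorial : ℕ) : ℝ) :=
        Nat.cast_le.mpr (fact_add_le j n)
      push_cast at h
      convert h using 2
    have hf : (0:ℝ) < n.factorial := by positivity
    have h3 : (stirling1 (n+j) p : ℝ) / n.factorial ≤ (((n:ℝ)+1)*((j:ℝ)+1))^j := by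
      rw [div_le_iff₀ hf]
      exact h1.trans h2
    calc (stirling1 (n+j) p : ℝ) / n.factorial * |r| ^ n
        ≤ (((n:ℝ)+1)*((j:ℝ)+1))^j * |r| ^ n := by
          apply mul_le_mul_of_nonneg_right h3 (by positivity)
      _ = ((j:ℝ)+1)^j * (((n:ℝ)+1)^j * |r| ^ n) := by rw [mul_pow]; ring
  apply Summable.of_nonneg_of_le (fun n => norm_nonneg _) hb
  exact ((aux_summable_pow j (by rwa [abs_abs])).mul_left _)

lemma hasDerivAt_tsum_pow {b : ℕ → ℝ} (hb0 : ∀ n, 0 ≤ b n)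
    (hbs : ∀ s : ℝ, |s| < 1 → Summable fun n : ℕ => b n * s ^ n)
    {z : ℝ} (hz : |z| < 1) :
    HasDerivAt (fun y : ℝ => ∑' n : ℕ, b n * y ^ n)
      (∑' n : ℕ, ((n : ℝ) + 1) * b (n + 1) * z ^ n) z := by
  set r : ℝ := (|z| + 1) / 2 with hr_def
  have habs : 0 ≤ |z| := abs_nonneg z
  have hr0 : 0 < r := by rw [hr_def]; linarith
  have hzr : |z| < r := by rw [hr_def]; linarith
  have hr1 : r < 1 := by rw [hr_def]; linarith
  set r' : ℝ := (r + 1) / 2 with hr'_def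
  have hr'0 : 0 < r' := by rw [hr'_def]; linarith
  have hrr' : r < r' := by rw [hr'_def]; linarith
  have hr'1 : r' < 1 := by rw [hr'_def]; linarith
  set t : ℝ := r / r' with ht_def
  have ht0 : 0 ≤ t := le_of_lt (div_pos hr0 hr'0)
  have ht1 : t < 1 := (div_lt_one hr'0).mpr hrr'
  have htabs : |t| < 1 := by rw [abs_of_nonneg ht0]; exact ht1
  have hT : Summable fun m : ℕ => ((m : ℝ) + 1) * t ^ m := by
    have := aux_summable_pow 1 htabs
    simpa using this
  set T : ℝ := ∑' m : ℕ, ((m : ℝ) + 1) * t ^ m with hT_def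
  have hbound : ∀ n : ℕ, ((n : ℝ) + 1) * r ^ n ≤ (T / r') * r' ^ (n + 1) := by
    intro n
    have h1 : ((n : ℝ) + 1) * t ^ n ≤ T :=
      Summable.le_tsum hT n fun m _ => by positivity
    have hrt : r = t * r' := by rw [ht_def]; field_simp
    calc ((n : ℝ) + 1) * r ^ n = (((n : ℝ) + 1) * t ^ n) * r' ^ n := by
          rw [hrt, mul_pow]; ring
      _ ≤ T * r' ^ n := by
          apply mul_le_mul_of_nonneg_right h1 (by positivity)
      _ = (T / r') * r' ^ (n + 1) := by
          field_simp; ring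
  set u : ℕ → ℝ := fun n => ((n : ℝ) + 1) * b (n + 1) * r ^ n with hu_def
  have hu : Summable u := by
    apply Summable.of_nonneg_of_le
      (fun n => by have := hb0 (n+1); positivity)
      (fun n => ?_)
      (((summable_nat_add_iff 1).2 (hbs r' (by rw [abs_of_pos hr'0]; exact hr'1))).mul_left (T / r'))
    · show ((n : ℝ) + 1) * b (n + 1) * r ^ n ≤ T / r' * (b (n + 1) * r' ^ (n + 1))
      have := hbound n
      have hb := hb0 (n + 1)
      calc ((n : ℝ) + 1) * b (n + 1) * r ^ n = (((n : ℝ) + 1) * r ^ n) * b (n + 1) := by ring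
        _ ≤ ((T / r') * r' ^ (n + 1)) * b (n + 1) := mul_le_mul_of_nonneg_right this hb
        _ = T / r' * (b (n + 1) * r' ^ (n + 1)) := by ring
  have hg : ∀ (n : ℕ) (y : ℝ), HasDerivAt (fun y : ℝ => b (n + 1) * y ^ (n + 1))
      (((n : ℝ) + 1) * b (n + 1) * y ^ n) y := by
    intro n y
    have := (hasDerivAt_pow (n + 1) y).const_mul (b (n + 1))
    refine this.congr_deriv ?_
    push_cast
    ring_nf
  have hmain : HasDerivAt (fun y : ℝ => ∑' n : ℕ, b (n + 1) * y ^ (n + 1))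
      (∑' n : ℕ, ((n : ℝ) + 1) * b (n + 1) * z ^ n) z := by
    apply hasDerivAt_tsum_of_isPreconnected hu isOpen_ball
      (convex_ball (0:ℝ) r).isPreconnected
      (fun n y _ => hg n y)
      (fun n y hy => ?_)
      (mem_ball_zero_iff.mpr (by simpa using hr0) : (0:ℝ) ∈ ball (0:ℝ) r)
      (by simpa using summable_zero)
      (mem_ball_zero_iff.mpr (by rwa [Real.norm_eq_abs]))
    · rw [Real.norm_eq_abs, abs_mul, abs_mul, abs_pow]
      have hy' : |y| < r := by rwa [mem_ball_zero_iff, Real.norm_eq_abs] at hy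
      rw [abs_of_nonneg (by positivity : (0:ℝ) ≤ (n:ℝ)+1), abs_of_nonneg (hb0 (n+1))]
      apply mul_le_mul_of_nonneg_left _ (by have := hb0 (n+1); positivity)
      exact pow_le_pow_left₀ (abs_nonneg y) (le_of_lt hy') n
  have heq : (fun y : ℝ => ∑' n : ℕ, b n * y ^ n)
      =ᶠ[nhds z] (fun y : ℝ => b 0 + ∑' n : ℕ, b (n + 1) * y ^ (n + 1)) := by
    have hopen : IsOpen (ball (0:ℝ) 1) := isOpen_ball
    have hmem : z ∈ ball (0:ℝ) 1 := mem_ball_zero_iff.mpr (by rwa [Real.norm_eq_abs])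
    filter_upwards [hopen.mem_nhds hmem] with y hy
    have hy1 : |y| < 1 := by rwa [mem_ball_zero_iff, Real.norm_eq_abs] at hy
    have hs := hbs y hy1
    rw [Summable.tsum_eq_zero_add hs]
    simp
  exact (HasDerivAt.const_add (b 0) hmain).congr_of_eventuallyEq heq

lemma stirling1_succ_sum (p n : ℕ) :
    (stirling1 (n+1) (p+1) : ℝ)
      = ∑ m ∈ range (n+1), ((n.factorial : ℝ) / m.factorial) * stirling1 m p := by
  induction n with
  | zero =>
    simp [stirling1]
  | succ n ih =>
    have hrec : (stirling1 (n+2) (p+1) : ℝ)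
        = (n+1 : ℝ) * stirling1 (n+1) (p+1) + stirling1 (n+1) p := by
      show ((stirling1 (n+1+1) (p+1) : ℕ) : ℝ) = _
      rw [show stirling1 (n+1+1) (p+1) = (n+1) * stirling1 (n+1) (p+1) + stirling1 (n+1) p from rfl]
      push_cast
      ring
    rw [hrec, ih]
    conv_rhs => rw [Finset.sum_range_succ]
    rw [Finset.mul_sum]
    congr 1
    · apply Finset.sum_congr rfl
      intro m hm
      have : ((n+1).factorial : ℝ) = (n+1 : ℝ) * n.factorial := by
        rw [Nat.factorial_succ]; push_cast; ring
      rw [this]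
      ring
    · have h0 : ((n+1).factorial : ℝ) ≠ 0 := by positivity
      rw [div_self h0, one_mul]

lemma hasDerivAt_fp (p : ℕ) {x : ℝ} (hx : x < 1) :
    HasDerivAt (fun y : ℝ => (-1:ℝ)^(p+1) * Real.log (1 - y)^(p+1) / ((p+1).factorial : ℝ))
      (((-1:ℝ)^p * Real.log (1-x)^p / (p.factorial : ℝ)) * (1 - x)⁻¹) x := by
  have h1 : HasDerivAt (fun y : ℝ => 1 - y) (-1) x := by
    simpa using (hasDerivAt_id x).const_sub 1
  have hne : (1 : ℝ) - x ≠ 0 := by linarith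
  have hlog : HasDerivAt (fun y : ℝ => Real.log (1 - y)) ((1-x)⁻¹ * (-1)) x :=
    (Real.hasDerivAt_log hne).comp x h1
  have hpow := hlog.pow (p+1)
  have := (hpow.const_mul ((-1:ℝ)^(p+1))).div_const (((p+1).factorial : ℝ))
  refine this.congr_deriv ?_
  have hfact : (((p+1).factorial : ℕ) : ℝ) = ((p:ℝ)+1) * p.factorial := by
    rw [Nat.factorial_succ]; push_cast; ring
  rw [hfact]
  have hp0 : ((p.factorial : ℕ) : ℝ) ≠ 0 := by positivity
  field_simp
  rw [Nat.add_sub_cancel]; push_cast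
  ring

lemma hasSum_base (p : ℕ) : ∀ z : ℝ, |z| < 1 →
    HasSum (fun n : ℕ => (stirling1 n p : ℝ) / n.factorial * z ^ n)
      ((-1:ℝ)^p * Real.log (1 - z)^p / (p.factorial : ℝ)) := by
  induction p with
  | zero =>
    intro z hz
    have h0 : ∀ n : ℕ, n ≠ 0 → (stirling1 n 0 : ℝ) / n.factorial * z ^ n = 0 := by
      intro n hn
      obtain ⟨m, rfl⟩ := Nat.exists_eq_succ_of_ne_zero hn
      simp [stirling1]
    have := hasSum_single (f := fun n : ℕ => (stirling1 n 0 : ℝ) / n.factorial * z ^ n) 0 h0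
    simpa [stirling1] using this
  | succ p ih =>
    intro z hz
    set b : ℕ → ℝ := fun n => (stirling1 n (p+1) : ℝ) / n.factorial with hb_def
    have hb0 : ∀ n, 0 ≤ b n := fun n => by positivity
    have hbs : ∀ s : ℝ, |s| < 1 → Summable fun n : ℕ => b n * s ^ n := by
      intro s hs
      simpa using summable_coeff (p+1) 0 hs
    set F : ℝ → ℝ := fun y => ∑' n : ℕ, b n * y ^ n with hF_def
    -- derivative of F at any |x| < 1
    have hderF : ∀ x : ℝ, |x| < 1 →
        HasDerivAt F (((-1:ℝ)^p * Real.log (1-x)^p / (p.factorial : ℝ)) * (1 - x)⁻¹) x := by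
      intro x hx
      have hD := hasDerivAt_tsum_pow hb0 hbs hx
      have hx1 : x < 1 := lt_of_le_of_lt (le_abs_self x) hx
      -- Cauchy product
      have hfnorm : Summable fun m : ℕ => ‖(stirling1 m p : ℝ) / m.factorial * x ^ m‖ := by
        apply Summable.congr (summable_coeff p 0 (r := |x|) (by rwa [abs_abs]))
        intro m
        rw [norm_mul, norm_div, norm_pow, Real.norm_eq_abs, Real.norm_eq_abs, Real.norm_eq_abs]
        rw [show m + 0 = m from rfl]
        rw [abs_of_nonneg (by positivity : (0:ℝ) ≤ (stirling1 m p : ℝ)),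
          abs_of_nonneg (by positivity : (0:ℝ) ≤ (m.factorial : ℝ))]
      have hgnorm : Summable fun l : ℕ => ‖x ^ l‖ := by
        apply Summable.congr (summable_geometric_of_lt_one (abs_nonneg x) hx)
        intro l
        rw [norm_pow, Real.norm_eq_abs]
      have hC := hasSum_sum_range_mul_of_summable_norm hfnorm hgnorm
      have hval1 : (∑' m : ℕ, (stirling1 m p : ℝ) / m.factorial * x ^ m)
          = (-1:ℝ)^p * Real.log (1-x)^p / (p.factorial : ℝ) := (ih x hx).tsum_eq
      have hval2 : (∑' l : ℕ, x ^ l) = (1 - x)⁻¹ :=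
        (hasSum_geometric_of_abs_lt_one hx).tsum_eq
      rw [hval1, hval2] at hC
      -- identify terms
      have hterm : ∀ n : ℕ,
          (∑ m ∈ range (n+1), ((stirling1 m p : ℝ) / m.factorial * x ^ m) * x ^ (n - m))
            = ((n:ℝ) + 1) * b (n+1) * x ^ n := by
        intro n
        have h1 : ∀ m ∈ range (n+1),
            ((stirling1 m p : ℝ) / m.factorial * x ^ m) * x ^ (n - m)
              = ((stirling1 m p : ℝ) / m.factorial) * x ^ n := by
          intro m hm
          have hmn : m ≤ n := Nat.lt_succ_iff.mp (mem_range.mp hm)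
          rw [mul_assoc, ← pow_add, Nat.add_sub_cancel' hmn]
        rw [Finset.sum_congr rfl h1, ← Finset.sum_mul]
        have h2 : (∑ m ∈ range (n+1), (stirling1 m p : ℝ) / m.factorial)
            = ((n:ℝ)+1) * b (n+1) := by
          have h3 := stirling1_succ_sum p n
          have hfn : ((n.factorial : ℕ) : ℝ) ≠ 0 := by positivity
          rw [hb_def]
          have hfact : (((n+1).factorial : ℕ) : ℝ) = ((n:ℝ)+1) * n.factorial := by
            rw [Nat.factorial_succ]; push_cast; ring
          simp only []
          rw [hfact]
          rw [show ((n:ℝ)+1) * ((stirling1 (n+1) (p+1) : ℝ) / (((n:ℝ)+1) * n.factorial))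
              = (stirling1 (n+1) (p+1) : ℝ) / n.factorial by
            field_simp]
          rw [h3, Finset.sum_div]
          apply Finset.sum_congr rfl
          intro m hm
          field_simp
        rw [h2]
      have hC' : HasSum (fun n : ℕ => ((n:ℝ) + 1) * b (n+1) * x ^ n)
          (((-1:ℝ)^p * Real.log (1-x)^p / (p.factorial : ℝ)) * (1 - x)⁻¹) := by
        rw [← funext hterm]
        exact hC
      rwa [hC'.tsum_eq] at hD
    -- derivative of fp (p+1)
    -- conclude equality on the interval
    have key : F z = (-1:ℝ)^(p+1) * Real.log (1 - z)^(p+1) / ((p+1).factorial : ℝ) := by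
      set G : ℝ → ℝ := fun y => (-1:ℝ)^(p+1) * Real.log (1 - y)^(p+1) / ((p+1).factorial : ℝ)
        with hG_def
      set h : ℝ → ℝ := fun y => F y - G y with hh_def
      set r : ℝ := (|z| + 1) / 2 with hr_def
      have habs : 0 ≤ |z| := abs_nonneg z
      have hr0 : 0 < r := by rw [hr_def]; linarith
      have hzr : |z| < r := by rw [hr_def]; linarith
      have hr1 : r < 1 := by rw [hr_def]; linarith
      have hlt : -r < r := by linarith
      have hderh : ∀ x ∈ Set.Icc (-r) r, HasDerivAt h 0 x := by
        intro x hx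
        have hx1 : |x| < 1 := by
          rw [abs_lt]
          constructor <;> [linarith [hx.1]; linarith [hx.2]]
        have h1 := hderF x hx1
        have h2 := hasDerivAt_fp p (lt_of_le_of_lt (le_abs_self x) hx1)
        have := h1.sub h2; simp only [sub_self] at this; exact this
      have hconst := constant_of_derivWithin_zero
        (f := h) (a := -r) (b := r)
        (fun x hx => (hderh x hx).differentiableAt.differentiableWithinAt)
        (fun x hx => by
          have := (hderh x (Set.mem_Icc_of_Ico hx)).hasDerivWithinAt
            (s := Set.Icc (-r) r)
          exact this.derivWithin ((uniqueDiffOn_Icc hlt) x (Set.mem_Icc_of_Ico hx)))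
      have hz_mem : z ∈ Set.Icc (-r) r := by
        rw [Set.mem_Icc]
        constructor <;> [linarith [neg_abs_le z]; linarith [le_abs_self z]]
      have h0_mem : (0:ℝ) ∈ Set.Icc (-r) r := by
        rw [Set.mem_Icc]; constructor <;> linarith
      have hzz : h z = h 0 := by rw [hconst z hz_mem, hconst 0 h0_mem]
      have hF0 : F 0 = 0 := by
        rw [hF_def]
        simp only []
        rw [tsum_eq_single 0 (fun n hn => by
          obtain ⟨m, rfl⟩ := Nat.exists_eq_succ_of_ne_zero hn
          simp)]
        simp [hb_def, stirling1]
      have hG0 : G 0 = 0 := by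
        rw [hG_def]
        simp [Real.log_one]
      have : h 0 = 0 := by rw [hh_def]; simp only []; rw [hF0, hG0]; ring
      have hz0 : h z = 0 := by rw [hzz, this]
      have := sub_eq_zero.mp (by rw [hh_def] at hz0; exact hz0)
      rw [hG_def] at this
      exact this
    have hsumz : Summable fun n : ℕ => b n * z ^ n := hbs z hz
    have := hsumz.hasSum
    rwa [show (∑' n : ℕ, b n * z ^ n) = (-1:ℝ)^(p+1) * Real.log (1 - z)^(p+1)
        / ((p+1).factorial : ℝ) from key] at this

lemma hasSum_iter (p j : ℕ) : ∀ z : ℝ, |z| < 1 →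
    HasSum (fun n : ℕ => (stirling1 (n+j) p : ℝ) / n.factorial * z ^ n)
      (iteratedDeriv j (fun x : ℝ => (-1:ℝ)^p * Real.log (1 - x)^p / (p.factorial : ℝ)) z) := by
  induction j with
  | zero =>
    intro z hz
    rw [iteratedDeriv_zero]
    simpa using hasSum_base p z hz
  | succ j ihj =>
    intro z hz
    set f : ℝ → ℝ := fun x : ℝ => (-1:ℝ)^p * Real.log (1 - x)^p / (p.factorial : ℝ) with hf_def
    set b : ℕ → ℝ := fun n => (stirling1 (n+j) p : ℝ) / n.factorial with hb_def
    have hb0 : ∀ n, 0 ≤ b n := fun n => by positivity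
    have hbs : ∀ s : ℝ, |s| < 1 → Summable fun n : ℕ => b n * s ^ n :=
      fun s hs => summable_coeff p j hs
    have hD := hasDerivAt_tsum_pow hb0 hbs hz
    have heq : iteratedDeriv j f =ᶠ[nhds z] (fun y : ℝ => ∑' n : ℕ, b n * y ^ n) := by
      have hopen : IsOpen (ball (0:ℝ) 1) := isOpen_ball
      have hmem : z ∈ ball (0:ℝ) 1 :=
        mem_ball_zero_iff.mpr (by rwa [Real.norm_eq_abs])
      filter_upwards [hopen.mem_nhds hmem] with y hy
      have hy1 : |y| < 1 := by rwa [mem_ball_zero_iff, Real.norm_eq_abs] at hy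
      exact ((ihj y hy1).tsum_eq).symm
    have hD' : HasDerivAt (iteratedDeriv j f)
        (∑' n : ℕ, ((n : ℝ) + 1) * b (n + 1) * z ^ n) z :=
      hD.congr_of_eventuallyEq heq
    have hval : iteratedDeriv (j+1) f z = ∑' n : ℕ, ((n : ℝ) + 1) * b (n + 1) * z ^ n := by
      rw [iteratedDeriv_succ]
      exact hD'.deriv
    have hsum := (summable_coeff p (j+1) hz).hasSum
    have hterm : ∀ n : ℕ, ((n : ℝ) + 1) * b (n + 1) * z ^ n
        = (stirling1 (n+(j+1)) p : ℝ) / n.factorial * z ^ n := by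
      intro n
      rw [hb_def]
      simp only []
      have h1 : n + 1 + j = n + (j + 1) := by omega
      rw [h1]
      have hfact : (((n+1).factorial : ℕ) : ℝ) = ((n:ℝ)+1) * n.factorial := by
        rw [Nat.factorial_succ]; push_cast; ring
      rw [hfact]
      have hfn : ((n.factorial : ℕ) : ℝ) ≠ 0 := by positivity
      field_simp
    have : (∑' n : ℕ, (stirling1 (n+(j+1)) p : ℝ) / n.factorial * z ^ n)
        = ∑' n : ℕ, ((n : ℝ) + 1) * b (n + 1) * z ^ n :=
      tsum_congr fun n => (hterm n).symm
    rw [hval, ← this]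
    exact hsum

lemma stirling2_eq_zero : ∀ {n k : ℕ}, n < k → stirling2 n k = 0 := by
  intro n
  induction n with
  | zero =>
    intro k h
    obtain ⟨m, rfl⟩ : ∃ m, k = m+1 := ⟨k-1, by omega⟩
    rfl
  | succ n ih =>
    intro k h
    obtain ⟨m, rfl⟩ : ∃ m, k = m+1 := ⟨k-1, by omega⟩
    show (m+1) * stirling2 n (m+1) + stirling2 n m = 0
    rw [ih (by omega), ih (by omega)]
    simp

lemma sum_stirling2_descFactorial (k n : ℕ) :
    ∑ j ∈ range (k+1), stirling2 k j * n.descFactorial j = n ^ k := by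
  induction k with
  | zero => simp [stirling2]
  | succ k ih =>
    have key : ∀ j, n.descFactorial j * n = n.descFactorial (j+1) + j * n.descFactorial j := by
      intro j
      by_cases h : j ≤ n
      · rw [Nat.descFactorial_succ]
        calc n.descFactorial j * n = ((n - j) + j) * n.descFactorial j := by
              rw [Nat.sub_add_cancel h]; ring
          _ = (n - j) * n.descFactorial j + j * n.descFactorial j := by rw [Nat.add_mul]
      · have hd : n.descFactorial j = 0 := Nat.descFactorial_eq_zero_iff_lt.mpr (by omega)
        have hd1 : n.descFactorial (j+1) = 0 := Nat.descFactorial_eq_zero_iff_lt.mpr (by omega)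
        simp [hd, hd1]
    have step1 : n^(k+1) = ∑ j ∈ range (k+1), stirling2 k j * n.descFactorial (j+1)
        + ∑ j ∈ range (k+1), j * stirling2 k j * n.descFactorial j := by
      rw [pow_succ, ← ih, Finset.sum_mul, ← Finset.sum_add_distrib]
      apply Finset.sum_congr rfl
      intro j _
      rw [mul_assoc, key j]
      ring
    rw [step1]
    rw [Finset.sum_range_succ' (fun j => stirling2 (k+1) j * n.descFactorial j) (k+1)]
    have h0 : stirling2 (k+1) 0 * n.descFactorial 0 = 0 := by
      rw [show stirling2 (k+1) 0 = 0 from rfl]; ring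
    rw [h0, add_zero]
    have hsplit : ∀ j, stirling2 (k+1) (j+1) * n.descFactorial (j+1)
        = (j+1) * stirling2 k (j+1) * n.descFactorial (j+1)
          + stirling2 k j * n.descFactorial (j+1) := by
      intro j
      rw [show stirling2 (k+1) (j+1) = (j+1) * stirling2 k (j+1) + stirling2 k j from rfl]
      ring
    rw [Finset.sum_congr rfl (fun j _ => hsplit j), Finset.sum_add_distrib]
    have hA : ∑ j ∈ range (k+1), j * stirling2 k j * n.descFactorial j
        = ∑ j ∈ range (k+1), (j+1) * stirling2 k (j+1) * n.descFactorial (j+1) := by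
      rw [Finset.sum_range_succ' (fun j => j * stirling2 k j * n.descFactorial j) k]
      rw [Finset.sum_range_succ (fun j => (j+1) * stirling2 k (j+1) * n.descFactorial (j+1)) k]
      rw [stirling2_eq_zero (by omega : k < k+1)]
      simp
    rw [hA]
    exact add_comm _ _

theorem modified_egf_stirling1 (k p : ℕ) (z : ℝ) (hz : |z| < 1) :
    HasSum (fun n : ℕ => (n : ℝ) ^ k * (stirling1 n p : ℝ) * z ^ n / (n.factorial : ℝ))
      (∑ j ∈ Finset.range (k + 1),
        (stirling2 k j : ℝ) * z ^ j *
          iteratedDeriv j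
            (fun x : ℝ => (-1 : ℝ) ^ p * Real.log (1 - x) ^ p / (p.factorial : ℝ)) z) := by
  set f : ℝ → ℝ := fun x : ℝ => (-1:ℝ)^p * Real.log (1 - x)^p / (p.factorial : ℝ) with hf_def
  set w : ℕ → ℕ → ℝ := fun j n =>
    (stirling2 k j : ℝ) * (n.descFactorial j : ℝ) * (stirling1 n p : ℝ) * z ^ n
      / (n.factorial : ℝ) with hw_def
  have hw : ∀ j ∈ range (k+1), HasSum (w j)
      ((stirling2 k j : ℝ) * z ^ j * iteratedDeriv j f z) := by
    intro j _
    have hj := (hasSum_iter p j z hz).mul_left ((stirling2 k j : ℝ) * z ^ j)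
    have hterm : ∀ n : ℕ, (stirling2 k j : ℝ) * z ^ j
        * ((stirling1 (n+j) p : ℝ) / n.factorial * z ^ n) = w j (n + j) := by
      intro n
      rw [hw_def]
      simp only []
      have hdesc : ((n+j).descFactorial j : ℝ) * (n.factorial : ℝ) = ((n+j).factorial : ℝ) := by
        have := Nat.factorial_mul_descFactorial (Nat.le_add_left j n)
        rw [show n + j - j = n from by omega] at this
        exact_mod_cast by rw [mul_comm]; exact_mod_cast this
      have hfn : ((n.factorial : ℕ) : ℝ) ≠ 0 := by positivity
      have hfnj : (((n+j).factorial : ℕ) : ℝ) ≠ 0 := by positivity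
      have hd : ((n+j).descFactorial j : ℝ) = ((n+j).factorial : ℝ) / n.factorial := by
        rw [eq_div_iff hfn]; exact hdesc
      rw [hd, pow_add]
      field_simp
    have hj' : HasSum (fun n => w j (n + j))
        ((stirling2 k j : ℝ) * z ^ j * iteratedDeriv j f z) := by
      rw [show (fun n => w j (n + j)) = (fun n : ℕ => (stirling2 k j : ℝ) * z ^ j
        * ((stirling1 (n+j) p : ℝ) / n.factorial * z ^ n)) from funext fun n => (hterm n).symm]
      exact hj
    have := (hasSum_nat_add_iff (f := w j) j).mp hj'
    have hzero : ∑ i ∈ range j, w j i = 0 := by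
      apply Finset.sum_eq_zero
      intro i hi
      rw [hw_def]
      simp only []
      rw [Nat.descFactorial_eq_zero_iff_lt.mpr (mem_range.mp hi)]
      simp
    rwa [hzero, add_zero] at this
  have hsum := hasSum_sum hw
  have hfun : (fun n : ℕ => ∑ j ∈ range (k+1), w j n)
      = fun n : ℕ => (n : ℝ) ^ k * (stirling1 n p : ℝ) * z ^ n / (n.factorial : ℝ) := by
    funext n
    have h1 : ∀ j ∈ range (k+1), w j n
        = ((stirling2 k j : ℝ) * (n.descFactorial j : ℝ))
          * ((stirling1 n p : ℝ) * z ^ n / (n.factorial : ℝ)) := by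
      intro j _
      rw [hw_def]
      simp only []
      ring
    rw [Finset.sum_congr rfl h1, ← Finset.sum_mul]
    have h2 : (∑ j ∈ range (k+1), (stirling2 k j : ℝ) * (n.descFactorial j : ℝ))
        = ((n : ℝ)) ^ k := by
      have := sum_stirling2_descFactorial k n
      exact_mod_cast congrArg (fun m : ℕ => (m : ℝ)) this
    rw [h2]
    ring
  rwa [hfun] at hsum

end Aux
end

section
/- For every natural number n and every real number x, x^n = ∑_{k=0}^{n} A(n,k) · binom(x+k, n), where binom(y, n) := (∏_{t=0}^{n-1} (y - t)) / n! is the generalized binomial coefficient of a real number y. -/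
noncomputable def myC (n : ℕ) (x : ℝ) : ℝ :=
  (∏ t ∈ Finset.range n, (x - t)) / n.factorial

lemma eulerian_zero : ∀ n m, n ≤ m → eulerian n (m + 1) = 0
  | 0, m, _ => rfl
  | n + 1, m, h => by
    show (m + 2) * eulerian n (m + 1) + (n - m) * eulerian n m = 0
    rw [eulerian_zero n m (by omega), Nat.sub_eq_zero_of_le (by omega)]
    ring

lemma eulerian_succ_succ (n k : ℕ) :
    eulerian (n + 1) (k + 1) = (k + 2) * eulerian n (k + 1) + (n - k) * eulerian n k := rfl

lemma myC_key (n k : ℕ) (x : ℝ) :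
    x * myC n (x + k) =
      ((k : ℝ) + 1) * myC (n + 1) (x + k) + ((n : ℝ) - k) * myC (n + 1) (x + (k + 1)) := by
  have h1 : (∏ t ∈ Finset.range (n + 1), (x + k - t))
      = (∏ t ∈ Finset.range n, (x + k - t)) * (x + k - n) := Finset.prod_range_succ _ _
  have h2 : (∏ t ∈ Finset.range (n + 1), (x + (k + 1 : ℕ) - t))
      = (∏ t ∈ Finset.range n, (x + k - t)) * (x + k + 1) := by
    rw [Finset.prod_range_succ']
    push_cast
    congr 1
    · exact Finset.prod_congr rfl fun t _ => by ring
    · ring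
  have hf : ((n + 1).factorial : ℝ) = (n + 1) * n.factorial := by
    rw [Nat.factorial_succ]; push_cast; ring
  have hn0 : (n.factorial : ℝ) ≠ 0 := Nat.cast_ne_zero.2 n.factorial_ne_zero
  simp only [myC, h1, hf]
  have h2' : (∏ t ∈ Finset.range (n + 1), (x + ((k : ℝ) + 1) - t))
      = (∏ t ∈ Finset.range n, (x + k - t)) * (x + k + 1) := by
    push_cast at h2 ⊢; exact h2
  rw [h2']
  field_simp
  ring

lemma worpitzky_myC (n : ℕ) (x : ℝ) :
    x ^ n = ∑ k ∈ Finset.range (n + 1), (eulerian n k : ℝ) * myC n (x + k) := by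
  induction n generalizing x with
  | zero => simp [eulerian, myC]
  | succ n ih =>
    set C := myC (n + 1)
    have E1 : ∀ m : ℕ, ((m : ℝ) + 1) * (eulerian n m : ℝ) * C (x + m) =
        ((m : ℝ) + 1) * (eulerian n m : ℝ) * C (x + m) := fun _ => rfl
    calc x ^ (n + 1)
        = ∑ k ∈ Finset.range (n + 1), (eulerian n k : ℝ) * (x * myC n (x + k)) := by
          rw [pow_succ, ih x, Finset.sum_mul]
          exact Finset.sum_congr rfl fun k _ => by ring
      _ = ∑ k ∈ Finset.range (n + 1),
            (((k : ℝ) + 1) * (eulerian n k : ℝ) * C (x + k)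
              + ((n : ℝ) - k) * (eulerian n k : ℝ) * C (x + (k + 1))) := by
          refine Finset.sum_congr rfl fun k _ => ?_
          rw [myC_key n k x]; ring
      _ = (∑ k ∈ Finset.range (n + 1), ((k : ℝ) + 1) * (eulerian n k : ℝ) * C (x + k))
            + ∑ k ∈ Finset.range (n + 1),
                ((n : ℝ) - k) * (eulerian n k : ℝ) * C (x + (k + 1)) :=
          Finset.sum_add_distrib
      _ = (∑ k ∈ Finset.range (n + 2), ((k : ℝ) + 1) * (eulerian n k : ℝ) * C (x + k))
            + ∑ k ∈ Finset.range (n + 1),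
                ((n : ℝ) - k) * (eulerian n k : ℝ) * C (x + (k + 1)) := by
          conv_rhs => rw [Finset.sum_range_succ
            (fun k => ((k : ℝ) + 1) * (eulerian n k : ℝ) * C (x + k))]
          rw [eulerian_zero n n le_rfl]
          push_cast; ring
      _ = ∑ k ∈ Finset.range (n + 2), (eulerian (n + 1) k : ℝ) * C (x + k) := by
          rw [Finset.sum_range_succ' (fun k => ((k : ℝ) + 1) * (eulerian n k : ℝ) * C (x + k)),
            Finset.sum_range_succ' (fun k => (eulerian (n + 1) k : ℝ) * C (x + k))]
          have hsum : ∀ k ∈ Finset.range (n + 1),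
              (eulerian (n + 1) (k + 1) : ℝ) * C (x + ((k : ℕ) + 1 : ℕ))
                = (((k + 1 : ℕ) : ℝ) + 1) * (eulerian n (k + 1) : ℝ) * C (x + ((k + 1 : ℕ) : ℝ))
                  + ((n : ℝ) - k) * (eulerian n k : ℝ) * C (x + ((k : ℝ) + 1)) := by
            intro k hk
            have hkn : k ≤ n := Nat.lt_succ_iff.mp (Finset.mem_range.mp hk)
            rw [eulerian_succ_succ]
            have hc : ((n - k : ℕ) : ℝ) = (n : ℝ) - k := Nat.cast_sub hkn
            have he : ((k : ℕ) + 1 : ℕ) = ((k + 1 : ℕ) : ℕ) := rfl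
            push_cast [hc]
            ring_nf
          rw [Finset.sum_congr rfl hsum, Finset.sum_add_distrib,
            show eulerian (n + 1) 0 = eulerian n 0 from rfl]
          push_cast
          ring


theorem worpitzky_identity (n : ℕ) (x : ℝ) :
    x ^ n =
      ∑ k ∈ Finset.range (n + 1),
        (eulerian n k : ℝ) *
          ((∏ t ∈ Finset.range n, (x + (k : ℝ) - (t : ℝ))) / (n.factorial : ℝ)) := by
  simpa [myC] using worpitzky_myC n x
end
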